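/- Let $(\Omega, \mathcal{F}, \mathbb{P})$ be a probability space with a filtration $(\mathcal{F}_k)_{k=0}^N$, $N = \tilde n + m$ with $\tilde n, m \ge 1$. For $1 \le k \le N$ let $\hat C_k$ be an $\mathcal{F}_k$-measurable random variable with $|\hat C_k| \le 1$ almost surely, and let $C_k = \mathbb{E}[\hat C_k \mid \mathcal{F}_{k-1}]$. Let $\{1, \dots, N\} = T \sqcup P$ be a partition with $|T| = \tilde n$ and $|P| = m$, let $T = G_1 \sqcup \dots \sqcup G_s$ be a further partition into nonempty groups, let $\mu^{(1)}, \dots, \mu^{(s)} \in [-1, 1]$, define $\mu_i = \mu^{(j)}$ for $i \in G_j$, let $\mu_i \in [-1,1]$ be arbitrary for $i \in P$, and set $\tilde\mu = \frac{1}{N}\sum_{i=1}^N \mu_i$. Then, for every $\epsilon > 0$, $\mathbb{P}\Big( \big\{\forall j \le s,\ \big|\tfrac{1}{|G_j|}\textstyle\sum_{i \in G_j} \hat C_i - \mu^{(j)}\big| \le \epsilon \big\} \cap \big\{ \big|\tfrac{1}{N}\textstyle\sum_{i=1}^N C_i - \tilde\mu\big| > \tfrac{2\tilde n \epsilon + m(2+\epsilon)}{\tilde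 n + m} \big\} \Big) \le 2\exp\big(-(\tilde n + m)\epsilon^2/8\big)$. -/

import Mathlib

open MeasureTheory Finset

lemma chord_bound (t x : ℝ) (hx : |x| ≤ 2) :
    Real.exp (t * x) ≤ Real.cosh (2 * t) + (Real.sinh (2 * t) / 2) * x := by
  obtain ⟨h1, h2⟩ := abs_le.mp hx
  have ha : (0:ℝ) ≤ (x + 2) / 4 := by linarith
  have hb : (0:ℝ) ≤ (2 - x) / 4 := by linarith
  have hab : (x + 2) / 4 + (2 - x) / 4 = 1 := by ring
  have key := convexOn_exp.2 (Set.mem_univ (2 * t)) (Set.mem_univ (-(2 * t))) ha hb hab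
  simp only [smul_eq_mul] at key
  have h3 : (x + 2) / 4 * (2 * t) + (2 - x) / 4 * (-(2 * t)) = t * x := by ring
  rw [h3] at key
  refine key.trans (le_of_eq ?_)
  rw [Real.cosh_eq, Real.sinh_eq]
  ring

lemma bdd_integrable {Ω : Type*} {m0 : MeasurableSpace Ω} {μ : Measure Ω}
    [IsProbabilityMeasure μ] {f : Ω → ℝ} (hf : AEStronglyMeasurable f μ) {B : ℝ}
    (h : ∀ᵐ ω ∂μ, |f ω| ≤ B) : Integrable f μ :=
  Integrable.mono' (integrable_const B) hf (by simpa [Real.norm_eq_abs] using h)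

lemma Icc_one_succ (n : ℕ) : Finset.Icc 1 (n + 1) = insert (n + 1) (Finset.Icc 1 n) := by
  ext i; simp only [Finset.mem_Icc, Finset.mem_insert]; omega

lemma azuma_mgf {Ω : Type*} {m0 : MeasurableSpace Ω} {μ : Measure Ω} [IsProbabilityMeasure μ]
    (ℱ : Filtration ℕ m0) (d : ℕ → Ω → ℝ) (N : ℕ)
    (hmeas : ∀ k, 1 ≤ k → k ≤ N → StronglyMeasurable[ℱ k] (d k))
    (hbdd : ∀ k, 1 ≤ k → k ≤ N → ∀ᵐ ω ∂μ, |d k ω| ≤ 2)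
    (hcond : ∀ k, 1 ≤ k → k ≤ N → μ[d k | ℱ (k - 1)] =ᵐ[μ] 0) (t : ℝ) :
    ∀ n, n ≤ N →
      ∫ ω, Real.exp (t * ∑ i ∈ Finset.Icc 1 n, d i ω) ∂μ ≤ Real.exp (2 * n * t ^ 2) := by
  intro n
  induction n with
  | zero =>
    intro _
    simp
  | succ n ih =>
    intro hn1
    have hnN : n ≤ N := le_of_lt hn1
    set S : Ω → ℝ := fun ω => ∑ i ∈ Finset.Icc 1 n, d i ω with hSdef
    set f : Ω → ℝ := fun ω => Real.exp (t * S ω) with hfdef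
    set g : Ω → ℝ := fun ω => Real.exp (t * d (n + 1) ω) with hgdef
    -- measurability
    have hSmeas : StronglyMeasurable[ℱ n] S := by
      apply Finset.stronglyMeasurable_fun_sum
      intro i hi
      rw [Finset.mem_Icc] at hi
      exact (hmeas i hi.1 (hi.2.trans hnN)).mono (ℱ.mono hi.2)
    have hfmeas : StronglyMeasurable[ℱ n] f :=
      Real.continuous_exp.comp_stronglyMeasurable (hSmeas.const_mul t)
    have hgmeas : AEStronglyMeasurable g μ :=
      (Real.continuous_exp.comp_stronglyMeasurable
        (((hmeas (n + 1) (Nat.le_add_left 1 n) hn1).mono (ℱ.le (n + 1))).const_mul t)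
        ).aestronglyMeasurable
    -- bounds
    have hbddS : ∀ᵐ ω ∂μ, ∀ i ∈ Finset.Icc 1 n, |d i ω| ≤ 2 := by
      rw [Filter.eventually_all_finset]
      intro i hi
      rw [Finset.mem_Icc] at hi
      exact hbdd i hi.1 (hi.2.trans hnN)
    have hfb : ∀ᵐ ω ∂μ, |f ω| ≤ Real.exp (|t| * (2 * n)) := by
      filter_upwards [hbddS] with ω hω
      rw [abs_of_pos (Real.exp_pos _), Real.exp_le_exp]
      calc t * S ω ≤ |t * S ω| := le_abs_self _
        _ = |t| * |S ω| := abs_mul _ _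
        _ ≤ |t| * (2 * n) := by
            refine mul_le_mul_of_nonneg_left ?_ (abs_nonneg t)
            calc |S ω| ≤ ∑ i ∈ Finset.Icc 1 n, |d i ω| := Finset.abs_sum_le_sum_abs _ _
              _ ≤ ∑ _i ∈ Finset.Icc 1 n, (2 : ℝ) := Finset.sum_le_sum hω
              _ = 2 * n := by simp [Nat.card_Icc, mul_comm]
    have hgb : ∀ᵐ ω ∂μ, |g ω| ≤ Real.exp (|t| * 2) := by
      filter_upwards [hbdd (n + 1) (Nat.le_add_left 1 n) hn1] with ω hω
      rw [abs_of_pos (Real.exp_pos _), Real.exp_le_exp]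
      calc t * d (n + 1) ω ≤ |t * d (n + 1) ω| := le_abs_self _
        _ = |t| * |d (n + 1) ω| := abs_mul _ _
        _ ≤ |t| * 2 := mul_le_mul_of_nonneg_left hω (abs_nonneg t)
    -- integrability
    have hf_int : Integrable f μ :=
      bdd_integrable ((hfmeas.mono (ℱ.le n)).aestronglyMeasurable) hfb
    have hg_int : Integrable g μ := bdd_integrable hgmeas hgb
    have hfg_int : Integrable (f * g) μ := by
      refine bdd_integrable (((hfmeas.mono (ℱ.le n)).aestronglyMeasurable).mul hgmeas)
        (B := Real.exp (|t| * (2 * n)) * Real.exp (|t| * 2)) ?_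
      filter_upwards [hfb, hgb] with ω h1 h2
      rw [Pi.mul_apply, abs_mul]
      exact mul_le_mul h1 h2 (abs_nonneg _) (Real.exp_pos _).le
    have hd_int : Integrable (d (n + 1)) μ :=
      bdd_integrable (((hmeas (n + 1) (Nat.le_add_left 1 n) hn1).mono
        (ℱ.le (n + 1))).aestronglyMeasurable) (hbdd (n + 1) (Nat.le_add_left 1 n) hn1)
    -- conditional bound of g
    have hRHS_int : Integrable (fun ω =>
        Real.cosh (2 * t) + (Real.sinh (2 * t) / 2) * d (n + 1) ω) μ :=
      (integrable_const _).add (hd_int.const_mul _)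
    have hchord : g ≤ᵐ[μ] fun ω =>
        Real.cosh (2 * t) + (Real.sinh (2 * t) / 2) * d (n + 1) ω := by
      filter_upwards [hbdd (n + 1) (Nat.le_add_left 1 n) hn1] with ω hω
      exact chord_bound t _ hω
    have hcond' : μ[d (n + 1) | ℱ n] =ᵐ[μ] 0 := by
      have := hcond (n + 1) (Nat.le_add_left 1 n) hn1
      simpa using this
    have hcondg : μ[g | ℱ n] ≤ᵐ[μ] fun _ => Real.cosh (2 * t) := by
      have h1 : μ[g | ℱ n] ≤ᵐ[μ]
          μ[fun ω => Real.cosh (2 * t) + (Real.sinh (2 * t) / 2) * d (n + 1) ω | ℱ n] :=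
        condExp_mono hg_int hRHS_int hchord
      have h2 : μ[fun ω => Real.cosh (2 * t) + (Real.sinh (2 * t) / 2) * d (n + 1) ω | ℱ n]
          =ᵐ[μ] fun _ => Real.cosh (2 * t) := by
        have ha : (fun ω => Real.cosh (2 * t) + (Real.sinh (2 * t) / 2) * d (n + 1) ω)
            = (fun _ => Real.cosh (2 * t)) + (Real.sinh (2 * t) / 2) • (d (n + 1)) := by
          ext ω; simp [smul_eq_mul]
        rw [ha]
        refine (condExp_add (integrable_const _) (hd_int.smul _) _).trans ?_
        have hc : μ[(fun _ => Real.cosh (2 * t) : Ω → ℝ) | ℱ n] =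
            fun _ => Real.cosh (2 * t) := condExp_const (ℱ.le n) _
        have hs : μ[(Real.sinh (2 * t) / 2) • d (n + 1) | ℱ n]
            =ᵐ[μ] (Real.sinh (2 * t) / 2) • μ[d (n + 1) | ℱ n] := condExp_smul _ _ _
        filter_upwards [hs, hcond'] with ω h h0
        simp only [Pi.add_apply, hc, h, Pi.smul_apply, smul_eq_mul, h0]
        simp [h0]
      filter_upwards [h1, h2] with ω hω1 hω2
      calc (μ[g | ℱ n]) ω ≤ _ := hω1
        _ = Real.cosh (2 * t) := hω2
    -- main computation
    have hsum : ∀ ω, ∑ i ∈ Finset.Icc 1 (n + 1), d i ω = S ω + d (n + 1) ω := by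
      intro ω
      rw [Icc_one_succ, Finset.sum_insert (by simp)]
      ring
    have hcalc : (fun ω => Real.exp (t * ∑ i ∈ Finset.Icc 1 (n + 1), d i ω)) = f * g := by
      ext ω
      rw [hsum ω]
      simp only [Pi.mul_apply, hfdef, hgdef, mul_add, Real.exp_add]
    rw [hcalc]
    have step1 : ∫ ω, (f * g) ω ∂μ = ∫ ω, (μ[f * g | ℱ n]) ω ∂μ :=
      (integral_condExp (ℱ.le n)).symm
    have hpull : μ[f * g | ℱ n] =ᵐ[μ] f * μ[g | ℱ n] :=
      condExp_mul_of_stronglyMeasurable_left hfmeas hfg_int hg_int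
    have hmain : μ[f * g | ℱ n] ≤ᵐ[μ] fun ω => f ω * Real.cosh (2 * t) := by
      filter_upwards [hpull, hcondg] with ω h1 h2
      rw [h1, Pi.mul_apply]
      exact mul_le_mul_of_nonneg_left h2 (Real.exp_pos _).le
    have step2 : ∫ ω, (μ[f * g | ℱ n]) ω ∂μ ≤ ∫ ω, f ω * Real.cosh (2 * t) ∂μ :=
      integral_mono_ae integrable_condExp (hf_int.mul_const _) hmain
    have step3 : ∫ ω, f ω * Real.cosh (2 * t) ∂μ = (∫ ω, f ω ∂μ) * Real.cosh (2 * t) :=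
      integral_mul_const _ _
    have hcoshb : Real.cosh (2 * t) ≤ Real.exp (2 * t ^ 2) := by
      have := Real.cosh_le_exp_half_sq (2 * t)
      calc Real.cosh (2 * t) ≤ Real.exp ((2 * t) ^ 2 / 2) := this
        _ = Real.exp (2 * t ^ 2) := by ring_nf
    have hfpos : 0 ≤ ∫ ω, f ω ∂μ := integral_nonneg fun ω => (Real.exp_pos _).le
    calc ∫ ω, (f * g) ω ∂μ ≤ ∫ ω, f ω * Real.cosh (2 * t) ∂μ := step1 ▸ step2
      _ = (∫ ω, f ω ∂μ) * Real.cosh (2 * t) := step3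
      _ ≤ Real.exp (2 * n * t ^ 2) * Real.exp (2 * t ^ 2) := by
          exact mul_le_mul (ih hnN) hcoshb (Real.cosh_pos _).le (Real.exp_pos _).le
      _ = Real.exp (2 * (n + 1 : ℕ) * t ^ 2) := by
          rw [← Real.exp_add]
          push_cast
          ring_nf

lemma azuma_tail {Ω : Type*} {m0 : MeasurableSpace Ω} {μ : Measure Ω} [IsProbabilityMeasure μ]
    (ℱ : Filtration ℕ m0) (d : ℕ → Ω → ℝ) (N : ℕ)
    (hmeas : ∀ k, 1 ≤ k → k ≤ N → StronglyMeasurable[ℱ k] (d k))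
    (hbdd : ∀ k, 1 ≤ k → k ≤ N → ∀ᵐ ω ∂μ, |d k ω| ≤ 2)
    (hcond : ∀ k, 1 ≤ k → k ≤ N → μ[d k | ℱ (k - 1)] =ᵐ[μ] 0)
    (ε : ℝ) (hε : 0 < ε) :
    (μ {ω | (N : ℝ) * ε ≤ ∑ i ∈ Finset.Icc 1 N, d i ω}).toReal ≤
      Real.exp (-((N : ℝ) * ε ^ 2) / 8) := by
  set X : Ω → ℝ := fun ω => ∑ i ∈ Finset.Icc 1 N, d i ω with hXdef
  have hXmeas : AEStronglyMeasurable X μ := by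
    refine (Finset.stronglyMeasurable_fun_sum _ fun i hi => ?_).aestronglyMeasurable
    rw [Finset.mem_Icc] at hi
    exact (hmeas i hi.1 hi.2).mono (ℱ.le i)
  have hXbdd : ∀ᵐ ω ∂μ, |X ω| ≤ 2 * N := by
    have h : ∀ᵐ ω ∂μ, ∀ i ∈ Finset.Icc 1 N, |d i ω| ≤ 2 := by
      rw [Filter.eventually_all_finset]
      intro i hi
      rw [Finset.mem_Icc] at hi
      exact hbdd i hi.1 hi.2
    filter_upwards [h] with ω hω
    calc |X ω| ≤ ∑ i ∈ Finset.Icc 1 N, |d i ω| := Finset.abs_sum_le_sum_abs _ _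
      _ ≤ ∑ _i ∈ Finset.Icc 1 N, (2 : ℝ) := Finset.sum_le_sum hω
      _ = 2 * N := by simp [Nat.card_Icc, mul_comm]
  have h_int : Integrable (fun ω => Real.exp (ε / 4 * X ω)) μ := by
    refine bdd_integrable ((Real.continuous_exp.comp_aestronglyMeasurable
      (hXmeas.const_mul (ε / 4)))) (B := Real.exp (|ε / 4| * (2 * N))) ?_
    filter_upwards [hXbdd] with ω hω
    rw [abs_of_pos (Real.exp_pos _), Real.exp_le_exp]
    calc ε / 4 * X ω ≤ |ε / 4 * X ω| := le_abs_self _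
      _ = |ε / 4| * |X ω| := abs_mul _ _
      _ ≤ |ε / 4| * (2 * N) := mul_le_mul_of_nonneg_left hω (abs_nonneg _)
  have hmgf : ProbabilityTheory.mgf X μ (ε / 4) ≤ Real.exp (2 * N * (ε / 4) ^ 2) := by
    unfold ProbabilityTheory.mgf
    exact azuma_mgf ℱ d N hmeas hbdd hcond (ε / 4) N le_rfl
  have hmar := ProbabilityTheory.measure_ge_le_exp_mul_mgf (μ := μ) (X := X)
    ((N : ℝ) * ε) (t := ε / 4) (by positivity) h_int
  calc (μ {ω | (N : ℝ) * ε ≤ X ω}).toReal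
      ≤ Real.exp (-(ε / 4) * ((N : ℝ) * ε)) * ProbabilityTheory.mgf X μ (ε / 4) := hmar
    _ ≤ Real.exp (-(ε / 4) * ((N : ℝ) * ε)) * Real.exp (2 * N * (ε / 4) ^ 2) :=
        mul_le_mul_of_nonneg_left hmgf (Real.exp_pos _).le
    _ = Real.exp (-((N : ℝ) * ε ^ 2) / 8) := by
        rw [← Real.exp_add]
        congr 1
        ring

/-- if all group averages of the measured correlations `Ĉ_i` are
`ε`-close to the ideal group correlations, then except with probability
`2 exp(-(ñ+m)ε²/8)` the average of the real correlations
`C_i = E[Ĉ_i | ℱ_{i-1}]` is `(2ñε + m(2+ε))/(ñ+m)`-close to the average ideal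
correlation. -/
theorem correlation_estimation
    {Ω : Type*} {m0 : MeasurableSpace Ω} {μ : Measure Ω} [IsProbabilityMeasure μ]
    (ntil m s : ℕ) (hn : 1 ≤ ntil) (hm : 1 ≤ m)
    (N : ℕ) (hN : N = ntil + m)
    (ℱ : Filtration ℕ m0)
    (Chat : ℕ → Ω → ℝ)
    (hmeas : ∀ k, 1 ≤ k → k ≤ N → StronglyMeasurable[ℱ k] (Chat k))
    (hbdd : ∀ k, 1 ≤ k → k ≤ N → ∀ᵐ ω ∂μ, |Chat k ω| ≤ 1)
    (C : ℕ → Ω → ℝ) (hC : ∀ k, 1 ≤ k → k ≤ N → C k = μ[Chat k | ℱ (k - 1)])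
    (T P : Finset ℕ)
    (hTP : T ∪ P = Finset.Icc 1 N) (hdisj : Disjoint T P)
    (hTcard : T.card = ntil) (hPcard : P.card = m)
    (G : Fin s → Finset ℕ)
    (hGdisj : ∀ j k : Fin s, j ≠ k → Disjoint (G j) (G k))
    (hGunion : Finset.univ.biUnion G = T)
    (hGne : ∀ j : Fin s, (G j).Nonempty)
    (μG : Fin s → ℝ) (hμG : ∀ j : Fin s, |μG j| ≤ 1)
    (μi : ℕ → ℝ) (hμi : ∀ j : Fin s, ∀ i ∈ G j, μi i = μG j)
    (hμiP : ∀ i ∈ P, |μi i| ≤ 1)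
    (μtil : ℝ) (hμtil : μtil = (1 / N : ℝ) * ∑ i ∈ Finset.Icc 1 N, μi i)
    (ε : ℝ) (hε : 0 < ε) :
    μ {ω | (∀ j : Fin s,
            |(1 / (G j).card : ℝ) * ∑ i ∈ G j, Chat i ω - μG j| ≤ ε) ∧
          (2 * ntil * ε + m * (2 + ε)) / (ntil + m) <
            |(1 / N : ℝ) * ∑ i ∈ Finset.Icc 1 N, C i ω - μtil|}
      ≤ ENNReal.ofReal (2 * Real.exp (-((ntil + m : ℝ) * ε ^ 2) / 8)) := by
  have hNpos : 0 < N := by omega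
  have hNR : (0 : ℝ) < N := by exact_mod_cast hNpos
  have hNcast : (N : ℝ) = (ntil : ℝ) + m := by rw [hN]; push_cast; ring
  set d : ℕ → Ω → ℝ := fun k => Chat k - C k with hddef
  have hd_meas : ∀ k, 1 ≤ k → k ≤ N → StronglyMeasurable[ℱ k] (d k) := by
    intro k h1 h2
    have : StronglyMeasurable[ℱ k] (C k) := by
      rw [hC k h1 h2]
      exact stronglyMeasurable_condExp.mono (ℱ.mono (Nat.sub_le k 1))
    exact (hmeas k h1 h2).sub this
  have hC_bdd : ∀ k, 1 ≤ k → k ≤ N → ∀ᵐ ω ∂μ, |C k ω| ≤ 1 := by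
    intro k h1 h2
    rw [hC k h1 h2]
    have := ae_bdd_condExp_of_ae_bdd (m := ℱ (k - 1)) (μ := μ) (R := 1) (f := Chat k)
      (by simpa using hbdd k h1 h2)
    simpa using this
  have hChat_int : ∀ k, 1 ≤ k → k ≤ N → Integrable (Chat k) μ := fun k h1 h2 =>
    bdd_integrable ((hmeas k h1 h2).mono (ℱ.le k)).aestronglyMeasurable (hbdd k h1 h2)
  have hd_bdd : ∀ k, 1 ≤ k → k ≤ N → ∀ᵐ ω ∂μ, |d k ω| ≤ 2 := by
    intro k h1 h2
    filter_upwards [hbdd k h1 h2, hC_bdd k h1 h2] with ω ha hb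
    calc |d k ω| = |Chat k ω - C k ω| := rfl
      _ ≤ |Chat k ω| + |C k ω| := abs_sub _ _
      _ ≤ 2 := by linarith
  have hd_cond : ∀ k, 1 ≤ k → k ≤ N → μ[d k | ℱ (k - 1)] =ᵐ[μ] 0 := by
    intro k h1 h2
    have hCk_int : Integrable (C k) μ := by rw [hC k h1 h2]; exact integrable_condExp
    have hsub : μ[d k | ℱ (k - 1)] =ᵐ[μ] μ[Chat k | ℱ (k - 1)] - μ[C k | ℱ (k - 1)] :=
      condExp_sub (hChat_int k h1 h2) hCk_int _
    have hCC : μ[C k | ℱ (k - 1)] = C k :=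
      condExp_of_stronglyMeasurable (ℱ.le (k - 1))
        (by rw [hC k h1 h2]; exact stronglyMeasurable_condExp) hCk_int
    filter_upwards [hsub] with ω hω
    rw [hω, Pi.sub_apply, hCC, ← hC k h1 h2]
    simp
  -- tail events
  set Mf : Ω → ℝ := fun ω => ∑ i ∈ Finset.Icc 1 N, d i ω with hMdef
  set A : Set Ω := {ω | (N : ℝ) * ε ≤ Mf ω} with hAdef
  set B : Set Ω := {ω | (N : ℝ) * ε ≤ ∑ i ∈ Finset.Icc 1 N, (-(d i)) ω} with hBdef
  have htailA : (μ A).toReal ≤ Real.exp (-((N : ℝ) * ε ^ 2) / 8) :=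
    azuma_tail ℱ d N hd_meas hd_bdd hd_cond ε hε
  have htailB : (μ B).toReal ≤ Real.exp (-((N : ℝ) * ε ^ 2) / 8) := by
    refine azuma_tail ℱ (fun k => -(d k)) N (fun k h1 h2 => (hd_meas k h1 h2).neg)
      (fun k h1 h2 => by filter_upwards [hd_bdd k h1 h2] with ω hω; simpa using hω)
      (fun k h1 h2 => ?_) ε hε
    refine (condExp_neg (d k) _).trans ?_
    filter_upwards [hd_cond k h1 h2] with ω hω
    simp [hω]
  have hBneg : ∀ ω, ω ∈ B ↔ (N : ℝ) * ε ≤ -Mf ω := by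
    intro ω
    simp only [hBdef, Set.mem_setOf_eq, Pi.neg_apply, Finset.sum_neg_distrib, hMdef]
  -- a.e. containment
  have hball : ∀ᵐ ω ∂μ, ∀ i ∈ Finset.Icc 1 N, |Chat i ω| ≤ 1 ∧ |C i ω| ≤ 1 := by
    rw [Filter.eventually_all_finset]
    intro i hi
    rw [Finset.mem_Icc] at hi
    exact (hbdd i hi.1 hi.2).and (hC_bdd i hi.1 hi.2)
  have hsub : μ {ω | (∀ j : Fin s,
            |(1 / (G j).card : ℝ) * ∑ i ∈ G j, Chat i ω - μG j| ≤ ε) ∧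
          (2 * ntil * ε + m * (2 + ε)) / (ntil + m) <
            |(1 / N : ℝ) * ∑ i ∈ Finset.Icc 1 N, C i ω - μtil|} ≤ μ (A ∪ B) := by
    refine measure_mono_ae ?_
    filter_upwards [hball] with ω hb
    intro hE
    obtain ⟨h1, h2⟩ := hE
    show ω ∈ A ∪ B
    rw [Set.mem_union, Set.mem_setOf_eq, hBneg ω]
    by_contra hcon
    push_neg at hcon
    have hMabs : |Mf ω| ≤ (N : ℝ) * ε := by
      rw [abs_le]; constructor <;> nlinarith [hcon.1, hcon.2]
    -- T part
    have hTsum : ∑ i ∈ T, (Chat i ω - μi i)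
        = ∑ j : Fin s, ∑ i ∈ G j, (Chat i ω - μi i) := by
      rw [← hGunion, Finset.sum_biUnion]
      exact fun j _ k _ hjk => hGdisj j k hjk
    have hTbound : |∑ i ∈ T, (Chat i ω - μi i)| ≤ (ntil : ℝ) * ε := by
      rw [hTsum]
      have hcards : ∑ j : Fin s, ((G j).card : ℝ) = (ntil : ℝ) := by
        have := Finset.card_biUnion (s := (Finset.univ : Finset (Fin s))) (t := G)
          (fun j _ k _ hjk => hGdisj j k hjk)
        rw [hGunion, hTcard] at this
        exact_mod_cast this.symm
      calc |∑ j : Fin s, ∑ i ∈ G j, (Chat i ω - μi i)|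
          ≤ ∑ j : Fin s, |∑ i ∈ G j, (Chat i ω - μi i)| := Finset.abs_sum_le_sum_abs _ _
        _ ≤ ∑ j : Fin s, ((G j).card : ℝ) * ε := by
            refine Finset.sum_le_sum fun j _ => ?_
            have hc : (0 : ℝ) < (G j).card := by exact_mod_cast (hGne j).card_pos
            have heq : ∑ i ∈ G j, (Chat i ω - μi i)
                = ((G j).card : ℝ) * ((1 / (G j).card : ℝ) * ∑ i ∈ G j, Chat i ω - μG j) := by
              rw [Finset.sum_sub_distrib]
              have hμs : ∑ i ∈ G j, μi i = ((G j).card : ℝ) * μG j := by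
                rw [Finset.sum_congr rfl (hμi j), Finset.sum_const, nsmul_eq_mul]
              rw [hμs]
              field_simp
            rw [heq, abs_mul, abs_of_pos hc]
            exact mul_le_mul_of_nonneg_left (h1 j) hc.le
        _ = (ntil : ℝ) * ε := by rw [← Finset.sum_mul, hcards]
    -- P part
    have hPbound : |∑ i ∈ P, (Chat i ω - μi i)| ≤ 2 * (m : ℝ) := by
      calc |∑ i ∈ P, (Chat i ω - μi i)| ≤ ∑ i ∈ P, |Chat i ω - μi i| :=
            Finset.abs_sum_le_sum_abs _ _
        _ ≤ ∑ _i ∈ P, (2 : ℝ) := by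
            refine Finset.sum_le_sum fun i hi => ?_
            have hiI : i ∈ Finset.Icc 1 N := by rw [← hTP]; exact Finset.mem_union_right _ hi
            have := (hb i hiI).1
            have h2i := hμiP i hi
            calc |Chat i ω - μi i| ≤ |Chat i ω| + |μi i| := abs_sub _ _
              _ ≤ 2 := by linarith
        _ = 2 * (m : ℝ) := by rw [Finset.sum_const, nsmul_eq_mul, hPcard]; ring
    have hsplit : ∑ i ∈ Finset.Icc 1 N, (Chat i ω - μi i)
        = ∑ i ∈ T, (Chat i ω - μi i) + ∑ i ∈ P, (Chat i ω - μi i) := by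
      rw [← hTP, Finset.sum_union hdisj]
    have hHμ : |∑ i ∈ Finset.Icc 1 N, Chat i ω - ∑ i ∈ Finset.Icc 1 N, μi i|
        ≤ (ntil : ℝ) * ε + 2 * m := by
      rw [← Finset.sum_sub_distrib, hsplit]
      exact (abs_add_le _ _).trans (add_le_add hTbound hPbound)
    have hMeq : ∑ i ∈ Finset.Icc 1 N, C i ω - ∑ i ∈ Finset.Icc 1 N, Chat i ω = -Mf ω := by
      rw [hMdef]
      simp only [hddef, Pi.sub_apply]
      rw [Finset.sum_sub_distrib]
      ring
    have hCμ : |∑ i ∈ Finset.Icc 1 N, C i ω - ∑ i ∈ Finset.Icc 1 N, μi i|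
        ≤ (N : ℝ) * ε + ((ntil : ℝ) * ε + 2 * m) := by
      calc |∑ i ∈ Finset.Icc 1 N, C i ω - ∑ i ∈ Finset.Icc 1 N, μi i|
          ≤ |∑ i ∈ Finset.Icc 1 N, C i ω - ∑ i ∈ Finset.Icc 1 N, Chat i ω|
            + |∑ i ∈ Finset.Icc 1 N, Chat i ω - ∑ i ∈ Finset.Icc 1 N, μi i| :=
            abs_sub_le _ _ _
        _ ≤ (N : ℝ) * ε + ((ntil : ℝ) * ε + 2 * m) := by
            refine add_le_add ?_ hHμ
            rw [hMeq, abs_neg]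
            exact hMabs
    have hfinal : |(1 / N : ℝ) * ∑ i ∈ Finset.Icc 1 N, C i ω - μtil|
        ≤ (2 * ntil * ε + m * (2 + ε)) / (ntil + m) := by
      have heq : (1 / N : ℝ) * ∑ i ∈ Finset.Icc 1 N, C i ω - μtil
          = (1 / N : ℝ) * (∑ i ∈ Finset.Icc 1 N, C i ω - ∑ i ∈ Finset.Icc 1 N, μi i) := by
        rw [hμtil]; ring
      rw [heq, abs_mul, abs_of_pos (by positivity : (0 : ℝ) < 1 / N)]
      calc (1 / N : ℝ) * |∑ i ∈ Finset.Icc 1 N, C i ω - ∑ i ∈ Finset.Icc 1 N, μi i|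
          ≤ (1 / N : ℝ) * ((N : ℝ) * ε + ((ntil : ℝ) * ε + 2 * m)) :=
            mul_le_mul_of_nonneg_left hCμ (by positivity)
        _ = (2 * ntil * ε + m * (2 + ε)) / (ntil + m) := by
            rw [hNcast]
            have hden : (0:ℝ) < (ntil : ℝ) + m := hNcast ▸ hNR
            field_simp
            ring
    linarith [h2, hfinal]
  have hA_le : μ A ≤ ENNReal.ofReal (Real.exp (-((N : ℝ) * ε ^ 2) / 8)) := by
    rw [← ENNReal.ofReal_toReal (measure_ne_top μ A)]
    exact ENNReal.ofReal_le_ofReal htailA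
  have hB_le : μ B ≤ ENNReal.ofReal (Real.exp (-((N : ℝ) * ε ^ 2) / 8)) := by
    rw [← ENNReal.ofReal_toReal (measure_ne_top μ B)]
    exact ENNReal.ofReal_le_ofReal htailB
  calc μ {ω | (∀ j : Fin s,
            |(1 / (G j).card : ℝ) * ∑ i ∈ G j, Chat i ω - μG j| ≤ ε) ∧
          (2 * ntil * ε + m * (2 + ε)) / (ntil + m) <
            |(1 / N : ℝ) * ∑ i ∈ Finset.Icc 1 N, C i ω - μtil|}
      ≤ μ (A ∪ B) := hsub
    _ ≤ μ A + μ B := measure_union_le _ _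
    _ ≤ ENNReal.ofReal (Real.exp (-((N : ℝ) * ε ^ 2) / 8))
        + ENNReal.ofReal (Real.exp (-((N : ℝ) * ε ^ 2) / 8)) := add_le_add hA_le hB_le
    _ = ENNReal.ofReal (2 * Real.exp (-((ntil + m : ℝ) * ε ^ 2) / 8)) := by
        rw [← ENNReal.ofReal_add (Real.exp_nonneg _) (Real.exp_nonneg _)]
        congr 1
        rw [hNcast]
        ring
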